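/- If n is a positive integer congruent to 2 modulo 4 and r is any natural number, then F_r + F_{r+1} + ... + F_{r+n-1} = L_{n/2} · F_{r + n/2 + 1}. -/
import Mathlib

lemma sum_fib_shift (r N : ℕ) :
    (∑ k ∈ Finset.range N, Nat.fib (r + k)) + Nat.fib (r + 1) = Nat.fib (r + N + 1) := by
  induction N with
  | zero => simp
  | succ N ih =>
    have h1 : r + (N + 1) + 1 = (r + N) + 2 := by ring
    rw [Finset.sum_range_succ, h1, Nat.fib_add_two]
    omega

lemma lucas_fib_id (L : ℕ → ℕ) (hL0 : L 0 = 2) (hL1 : L 1 = 1)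
    (hL : ∀ n, L (n + 2) = L (n + 1) + L n) :
    ∀ m r, (Nat.fib (r + 2 * m + 1) : ℤ)
      = L m * Nat.fib (r + m + 1) - (-1 : ℤ) ^ m * Nat.fib (r + 1) := by
  intro m
  induction m using Nat.twoStepInduction with
  | zero =>
    intro r
    simp [hL0]
    push_cast
    ring
  | one =>
    intro r
    have : r + 2 * 1 + 1 = (r + 1) + 2 := by ring
    rw [this, Nat.fib_add_two, hL1]
    push_cast
    ring
  | more m ih1 ih2 =>
    intro r
    have e1 := ih1 (r + 2)  -- fib(r+2m+3) = L m * fib(r+m+3) - (-1)^m fib(r+3)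
    have e2 := ih2 (r + 1)  -- fib(r+2m+4) = L(m+1) * fib(r+m+3) - (-1)^(m+1) fib(r+2)
    have h1 : r + 2 + 2 * m + 1 = r + 2 * m + 3 := by ring
    have h2 : r + 2 + m + 1 = r + m + 3 := by ring
    have h3 : r + 1 + 2 * (m + 1) + 1 = r + 2 * m + 4 := by ring
    have h4 : r + 1 + (m + 1) + 1 = r + m + 3 := by ring
    rw [h1, h2] at e1
    rw [h3, h4] at e2
    have hf : (Nat.fib (r + 2 * m + 5) : ℤ)
        = Nat.fib (r + 2 * m + 3) + Nat.fib (r + 2 * m + 4) := by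
      have : r + 2 * m + 5 = (r + 2 * m + 3) + 2 := by ring
      rw [this, Nat.fib_add_two]; push_cast; ring
    have hf3 : (Nat.fib (r + 3) : ℤ) = Nat.fib (r + 1) + Nat.fib (r + 2) := by
      have : r + 3 = (r + 1) + 2 := by ring
      rw [this, Nat.fib_add_two]; push_cast; ring
    have hgoal : r + 2 * (m + 2) + 1 = r + 2 * m + 5 := by ring
    have hgoal2 : r + (m + 2) + 1 = r + m + 3 := by ring
    rw [hgoal, hgoal2, hL m, hf]
    push_cast at e1 e2 ⊢
    rw [e1, e2] at *
    rw [hf3]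
    ring

theorem sum_fib_shifted (L : ℕ → ℕ) (hL0 : L 0 = 2) (hL1 : L 1 = 1)
    (hL : ∀ n, L (n + 2) = L (n + 1) + L n)
    (n : ℕ) (hn : 0 < n) (hn4 : n % 4 = 2) (r : ℕ) :
    (∑ k ∈ Finset.range n, Nat.fib (r + k)) = L (n / 2) * Nat.fib (r + n / 2 + 1) := by
  obtain ⟨j, hj⟩ : ∃ j, n = 4 * j + 2 := ⟨n / 4, by omega⟩
  set m := n / 2 with hm
  have hmval : m = 2 * j + 1 := by omega
  have hn2 : n = 2 * m := by omega
  have hsum := sum_fib_shift r n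
  have hid := lucas_fib_id L hL0 hL1 hL m r
  have hodd : (-1 : ℤ) ^ m = -1 := by
    rw [hmval]; rw [pow_succ, pow_mul]; norm_num
  rw [hodd] at hid
  have hn1 : r + n + 1 = r + 2 * m + 1 := by omega
  rw [hn1] at hsum
  have : (Nat.fib (r + 2 * m + 1) : ℤ)
      = L m * Nat.fib (r + m + 1) + Nat.fib (r + 1) := by rw [hid]; ring
  have := this
  -- convert to ℕ
  have hfin : Nat.fib (r + 2 * m + 1) = L m * Nat.fib (r + m + 1) + Nat.fib (r + 1) := by
    exact_mod_cast this
  omega
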